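/- For the greedy weighted set cover algorithm applied to a single task with required skill set Y of size N and worker skill sets with positive costs, the cost of the greedy solution is at most H(N) = ∑_{i=1}^{N} 1/i times the cost of an optimal cover. -/

import Mathlib

open Finset

private lemma myH_nonneg (n : ℕ) : 0 ≤ ∑ i ∈ Finset.range n, (1:ℝ)/(i+1) :=
  Finset.sum_nonneg fun i _ => by positivity

private lemma myH_mono {m n : ℕ} (h : m ≤ n) :
    (∑ i ∈ Finset.range m, (1:ℝ)/(i+1)) ≤ ∑ i ∈ Finset.range n, (1:ℝ)/(i+1) :=
  Finset.sum_le_sum_of_subset_of_nonneg (Finset.range_subset_range.2 h)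
    (fun i _ _ => by positivity)

private lemma frac_le_H {m n : ℕ} (h : m ≤ n) :
    ((n - m : ℕ) : ℝ) / n ≤
      (∑ i ∈ Finset.range n, (1:ℝ)/(i+1)) - ∑ i ∈ Finset.range m, (1:ℝ)/(i+1) := by
  rcases Nat.eq_zero_or_pos n with h0 | h0
  · have hm : m = 0 := by omega
    subst hm; simp [h0]
  · rw [← Finset.sum_Ico_eq_sub _ h]
    have hb : ∀ i ∈ Finset.Ico m n, (1:ℝ)/n ≤ 1/(i+1) := by
      intro i hi
      have h1 : (i:ℝ)+1 ≤ n := by exact_mod_cast Nat.succ_le_of_lt (Finset.mem_Ico.1 hi).2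
      exact one_div_le_one_div_of_le (by positivity) h1
    have := Finset.card_nsmul_le_sum (Finset.Ico m n) (fun i => (1:ℝ)/(i+1)) ((1:ℝ)/n) hb
    rw [Nat.card_Ico] at this
    calc ((n-m:ℕ):ℝ)/n = (n-m:ℕ) • ((1:ℝ)/n) := by
          rw [nsmul_eq_mul]; ring
      _ ≤ _ := this

private lemma sum_biUnion_le_sum {α β : Type*} [DecidableEq β] (K : Finset α)
    (X : α → Finset β) (f : β → ℝ) (hf : ∀ y, 0 ≤ f y) :
    ∑ y ∈ K.biUnion X, f y ≤ ∑ w ∈ K, ∑ y ∈ X w, f y := by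
  classical
  induction K using Finset.induction with
  | empty => simp
  | insert _ _ hnotmem ih =>
    rename_i a s
    rw [Finset.biUnion_insert, Finset.sum_insert hnotmem]
    calc ∑ y ∈ X a ∪ s.biUnion X, f y ≤ ∑ y ∈ X a, f y + ∑ y ∈ s.biUnion X, f y := by
          have h1 : ∑ y ∈ X a ∪ s.biUnion X, f y + ∑ y ∈ X a ∩ s.biUnion X, f y
              = ∑ y ∈ X a, f y + ∑ y ∈ s.biUnion X, f y := Finset.sum_union_inter
          have h2 : 0 ≤ ∑ y ∈ X a ∩ s.biUnion X, f y := Finset.sum_nonneg fun y _ => hf y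
          linarith
      _ ≤ _ := by linarith [ih]

/-- Greedy weighted set cover for a single task: if the greedy sequence `sel`
always picks a worker minimizing `c_w / |X_w ∩ U|` over workers whose skills
intersect the uncovered set `U`, and covers `Y` after `T` steps, then its total
cost is at most `H(N)` times the cost of any cover of `Y`, where `N = |Y|`. -/
theorem greedy_set_cover_harmonic_bound
    {Ψ ι : Type*} [DecidableEq Ψ] [DecidableEq ι] [Fintype ι]
    (Y : Finset Ψ) (N : ℕ) (hN : Y.card = N) (hN1 : 1 ≤ N)
    (X : ι → Finset Ψ) (c : ι → ℝ)
    (hc : ∀ w, 0 < c w)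
    (hXsub : ∀ w, X w ⊆ Y)
    (hcover : Y ⊆ Finset.univ.biUnion X)
    (sel : ℕ → ι) (U : ℕ → Finset Ψ) (T : ℕ)
    (hU0 : U 0 = Y)
    (hUstep : ∀ t, U (t + 1) = U t \ X (sel t))
    (hT : U T = ∅)
    (hTmin : ∀ t < T, (U t).Nonempty)
    (hgreedy : ∀ t < T, (X (sel t) ∩ U t).Nonempty ∧
      ∀ w : ι, (X w ∩ U t).Nonempty →
        c (sel t) / ((X (sel t) ∩ U t).card : ℝ) ≤
          c w / ((X w ∩ U t).card : ℝ)) :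
    ∀ K : Finset ι, Y ⊆ K.biUnion X →
      (∑ t ∈ Finset.range T, c (sel t)) ≤
        (∑ i ∈ Finset.range N, (1 : ℝ) / (i + 1)) * ∑ w ∈ K, c w := by
  intro K hK
  set H : ℕ → ℝ := fun n => ∑ i ∈ Finset.range n, (1:ℝ)/(i+1) with hHdef
  set C : ℕ → Finset Ψ := fun t => X (sel t) ∩ U t with hCdef
  set q : ℕ → ℝ := fun t => c (sel t) / ((C t).card : ℝ) with hqdef
  have hCpos : ∀ t < T, 0 < (C t).card := fun t ht => Finset.card_pos.2 (hgreedy t ht).1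
  have hqpos : ∀ t < T, 0 < q t := fun t ht =>
    div_pos (hc _) (by exact_mod_cast hCpos t ht)
  set p : Ψ → ℝ := fun y => ∑ t ∈ Finset.range T, if y ∈ C t then q t else 0 with hpdef
  have hpnonneg : ∀ y, 0 ≤ p y := by
    intro y
    apply Finset.sum_nonneg
    intro t ht
    split
    · exact (hqpos t (Finset.mem_range.1 ht)).le
    · exact le_refl _
  have hUY : ∀ t, U t ⊆ Y := by
    intro t
    induction t with
    | zero => rw [hU0]
    | succ n ih => rw [hUstep]; exact Finset.sdiff_subset.trans ih
  have hCY : ∀ t, C t ⊆ Y := fun t => (Finset.inter_subset_right).trans (hUY t)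
  -- sum over a finset with indicator
  have hind : ∀ (s : Finset Ψ) (t : ℕ),
      (∑ y ∈ s, if y ∈ C t then q t else 0) = ((s ∩ C t).card : ℝ) * q t := by
    intro s t
    rw [Finset.sum_ite_mem, Finset.sum_const, nsmul_eq_mul]
  -- greedy cost equals sum of prices over Y
  have key1 : (∑ t ∈ Finset.range T, c (sel t)) = ∑ y ∈ Y, p y := by
    rw [hpdef]
    rw [Finset.sum_comm]
    apply Finset.sum_congr rfl
    intro t ht
    rw [hind, Finset.inter_eq_right.2 (hCY t)]
    rw [hqdef]
    have h0 : ((C t).card : ℝ) ≠ 0 := by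
      exact_mod_cast (hCpos t (Finset.mem_range.1 ht)).ne'
    field_simp
  -- per-worker bound
  have keyw : ∀ w : ι, (∑ y ∈ X w, p y) ≤ c w * H N := by
    intro w
    set a : ℕ → ℕ := fun t => (X w ∩ U t).card with hadef
    have hmono : ∀ t, a (t + 1) ≤ a t := by
      intro t
      apply Finset.card_le_card
      apply Finset.inter_subset_inter_left
      rw [hUstep]
      exact Finset.sdiff_subset
    have hdiff : ∀ t, (X w ∩ C t).card = a t - a (t + 1) := by
      intro t
      have hset : X w ∩ U (t+1) = (X w ∩ U t) \ (X w ∩ C t) := by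
        rw [hUstep, hCdef]
        ext y
        simp only [Finset.mem_inter, Finset.mem_sdiff]
        tauto
      have hsub : X w ∩ C t ⊆ X w ∩ U t := by
        intro y hy
        simp only [hCdef, Finset.mem_inter] at hy ⊢
        exact ⟨hy.1, hy.2.2⟩
      have : a (t+1) = a t - (X w ∩ C t).card := by
        rw [hadef]; simp only
        rw [hset, Finset.card_sdiff_of_subset hsub]
      have hle : (X w ∩ C t).card ≤ a t := Finset.card_le_card hsub
      omega
    have hterm : ∀ t < T,
        ((X w ∩ C t).card : ℝ) * q t ≤ c w * (H (a t) - H (a (t + 1))) := by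
      intro t ht
      rcases Finset.eq_empty_or_nonempty (X w ∩ C t) with he | hne
      · have h1 : a (t+1) = a t := by
          have hd := hdiff t
          rw [he] at hd
          simp only [Finset.card_empty] at hd
          have := hmono t
          omega
        rw [he, h1]
        simp
      · have hXwU : (X w ∩ U t).Nonempty := by
          obtain ⟨y, hy⟩ := hne
          simp only [hCdef, Finset.mem_inter] at hy
          exact ⟨y, Finset.mem_inter.2 ⟨hy.1, hy.2.2⟩⟩
        have hg := (hgreedy t ht).2 w hXwU
        have hq_le : q t ≤ c w / (a t : ℝ) := hg
        have hcardnn : (0:ℝ) ≤ ((X w ∩ C t).card : ℝ) := Nat.cast_nonneg _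
        calc ((X w ∩ C t).card : ℝ) * q t
            ≤ ((X w ∩ C t).card : ℝ) * (c w / (a t : ℝ)) :=
              mul_le_mul_of_nonneg_left hq_le hcardnn
          _ = c w * (((a t - a (t+1) : ℕ) : ℝ) / (a t : ℝ)) := by
              rw [hdiff t]; ring
          _ ≤ c w * (H (a t) - H (a (t+1))) :=
              mul_le_mul_of_nonneg_left (frac_le_H (hmono t)) (hc w).le
    have hsum : (∑ y ∈ X w, p y) = ∑ t ∈ Finset.range T, ((X w ∩ C t).card : ℝ) * q t := by
      rw [hpdef]
      rw [Finset.sum_comm]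
      exact Finset.sum_congr rfl fun t _ => hind (X w) t
    rw [hsum]
    calc ∑ t ∈ Finset.range T, ((X w ∩ C t).card : ℝ) * q t
        ≤ ∑ t ∈ Finset.range T, c w * (H (a t) - H (a (t + 1))) :=
          Finset.sum_le_sum fun t ht => hterm t (Finset.mem_range.1 ht)
      _ = c w * (H (a 0) - H (a T)) := by
          rw [← Finset.mul_sum, Finset.sum_range_sub' (fun t => H (a t))]
      _ ≤ c w * H N := by
          apply mul_le_mul_of_nonneg_left _ (hc w).le
          have h1 : a 0 ≤ N := by
            rw [hadef]; simp only
            rw [hU0, Finset.inter_eq_left.2 (hXsub w), ← hN]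
            exact Finset.card_le_card (hXsub w)
          have h2 : 0 ≤ H (a T) := myH_nonneg _
          have h3 : H (a 0) ≤ H N := myH_mono h1
          linarith
  -- combine
  calc (∑ t ∈ Finset.range T, c (sel t)) = ∑ y ∈ Y, p y := key1
    _ ≤ ∑ y ∈ K.biUnion X, p y :=
        Finset.sum_le_sum_of_subset_of_nonneg hK (fun y _ _ => hpnonneg y)
    _ ≤ ∑ w ∈ K, ∑ y ∈ X w, p y := sum_biUnion_le_sum K X p hpnonneg
    _ ≤ ∑ w ∈ K, c w * H N := Finset.sum_le_sum fun w _ => keyw w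
    _ = H N * ∑ w ∈ K, c w := by rw [← Finset.sum_mul]; ring
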